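/- Let n ≥ 1 be an integer, μ ∈ ℝ, L > 0, and let x = (x_1,…,x_n) and x' = (x'_1,…,x'_n) be vectors in [μ−L, μ+L]^n that differ in exactly one coordinate. Let 0 < ε ≤ 1 and 0 < δ ≤ 1, and set σ_DP² = 8L²·ln(1.25/δ)/ε². Then for every Borel set S ⊆ ℝ, the Gaussian measure N(0, σ_DP²) satisfies P_{Z∼N(0,σ_DP²)}( (x_1+⋯+x_n)/n + Z/n ∈ S ) ≤ e^ε · P_{Z∼N(0,σ_DP²)}( (x'_1+⋯+x'_n)/n + Z/n ∈ S ) + δ. -/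

import Mathlib

open MeasureTheory ProbabilityTheory Real
open scoped NNReal ENNReal

namespace GaussDPAux

variable {v : ℝ≥0}

lemma pdf_neg (v : ℝ≥0) (z : ℝ) : gaussianPDFReal 0 v (-z) = gaussianPDFReal 0 v z := by
  simp [gaussianPDFReal, neg_sq]

lemma gpdf_neg (v : ℝ≥0) (z : ℝ) : gaussianPDF 0 v (-z) = gaussianPDF 0 v z := by
  simp [gaussianPDF, pdf_neg]

lemma gauss_Iio (hv : v ≠ 0) (a : ℝ) :
    gaussianReal 0 v (Set.Iio a) = gaussianReal 0 v (Set.Ioi (-a)) := by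
  rw [gaussianReal_apply _ hv, gaussianReal_apply _ hv,
    ← lintegral_indicator measurableSet_Iio, ← lintegral_indicator measurableSet_Ioi]
  have hmeas : Measurable ((Set.Iio a).indicator (gaussianPDF 0 v)) :=
    (measurable_gaussianPDF 0 v).indicator measurableSet_Iio
  rw [← (Measure.measurePreserving_neg (volume : Measure ℝ)).lintegral_comp hmeas]
  congr 1
  ext z
  by_cases hz : z ∈ Set.Ioi (-a)
  · have hz' : -z ∈ Set.Iio a := by
      simp only [Set.mem_Ioi] at hz
      simp only [Set.mem_Iio]
      linarith
    rw [Set.indicator_of_mem hz, Set.indicator_of_mem hz', gpdf_neg]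
  · have hz' : -z ∉ Set.Iio a := by
      simp only [Set.mem_Ioi, not_lt] at hz
      simp only [Set.mem_Iio, not_lt]
      linarith
    rw [Set.indicator_of_notMem hz, Set.indicator_of_notMem hz']

lemma gauss_Ioi_zero_le_half (hv : v ≠ 0) :
    gaussianReal 0 v (Set.Ioi (0 : ℝ)) ≤ 1 / 2 := by
  have hsym : gaussianReal 0 v (Set.Iio (0 : ℝ)) = gaussianReal 0 v (Set.Ioi (0 : ℝ)) := by
    simpa using gauss_Iio hv 0
  have hd : Disjoint (Set.Iio (0 : ℝ)) (Set.Ioi (0 : ℝ)) := by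
    apply Set.disjoint_left.mpr
    intro z hz hz'
    simp only [Set.mem_Iio] at hz
    simp only [Set.mem_Ioi] at hz'
    linarith
  have hun : gaussianReal 0 v (Set.Iio (0 : ℝ) ∪ Set.Ioi 0) ≤ 1 := prob_le_one
  rw [measure_union hd measurableSet_Ioi, hsym] at hun
  rw [ENNReal.le_div_iff_mul_le (Or.inl two_ne_zero) (Or.inl ENNReal.ofNat_ne_top), mul_two]
  exact hun

lemma gauss_tail (hv : v ≠ 0) {t : ℝ} (ht : 0 ≤ t) :
    gaussianReal 0 v (Set.Ioi t) ≤ ENNReal.ofReal (rexp (-t ^ 2 / (2 * v)) / 2) := by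
  have hv' : (0 : ℝ) < v := lt_of_le_of_ne v.2 (by exact_mod_cast (Ne.symm hv))
  have hg : Measurable (gaussianPDF 0 v) := measurable_gaussianPDF 0 v
  have hgt : Measurable fun z : ℝ => gaussianPDF 0 v (z - t) := hg.comp (measurable_id.sub_const t)
  rw [gaussianReal_apply _ hv]
  have key : ∀ z ∈ Set.Ioi t,
      gaussianPDF 0 v z ≤ ENNReal.ofReal (rexp (-t ^ 2 / (2 * v))) * gaussianPDF 0 v (z - t) := by
    intro z hz
    simp only [Set.mem_Ioi] at hz
    rw [gaussianPDF, gaussianPDF, ← ENNReal.ofReal_mul (exp_nonneg _)]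
    apply ENNReal.ofReal_le_ofReal
    unfold gaussianPDFReal
    simp only [sub_zero]
    have hexp : rexp (-z ^ 2 / (2 * v)) ≤
        rexp (-t ^ 2 / (2 * v)) * rexp (-(z - t) ^ 2 / (2 * v)) := by
      rw [← exp_add, exp_le_exp]
      have h2v : (0 : ℝ) < 2 * v := by positivity
      have heq : -t ^ 2 / (2 * v) + -(z - t) ^ 2 / (2 * v) - (-z ^ 2 / (2 * v))
          = (2 * t * (z - t)) / (2 * v) := by
        field_simp
        ring
      have hnn : (0 : ℝ) ≤ (2 * t * (z - t)) / (2 * v) :=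
        div_nonneg (by nlinarith) h2v.le
      linarith [heq ▸ hnn]
    calc (√(2 * π * v))⁻¹ * rexp (-z ^ 2 / (2 * v))
        ≤ (√(2 * π * v))⁻¹ * (rexp (-t ^ 2 / (2 * v)) * rexp (-(z - t) ^ 2 / (2 * v))) :=
          mul_le_mul_of_nonneg_left hexp (by positivity)
      _ = rexp (-t ^ 2 / (2 * v)) * ((√(2 * π * v))⁻¹ * rexp (-(z - t) ^ 2 / (2 * v))) := by ring
  calc ∫⁻ z in Set.Ioi t, gaussianPDF 0 v z
      ≤ ∫⁻ z in Set.Ioi t, ENNReal.ofReal (rexp (-t ^ 2 / (2 * v))) * gaussianPDF 0 v (z - t) :=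
        setLIntegral_mono (hgt.const_mul _) key
    _ = ENNReal.ofReal (rexp (-t ^ 2 / (2 * v))) * ∫⁻ z in Set.Ioi t, gaussianPDF 0 v (z - t) := by
        rw [lintegral_const_mul _ hgt]
    _ = ENNReal.ofReal (rexp (-t ^ 2 / (2 * v))) * gaussianReal 0 v (Set.Ioi 0) := by
        congr 1
        rw [← lintegral_indicator measurableSet_Ioi, gaussianReal_apply _ hv,
          ← lintegral_indicator measurableSet_Ioi]
        have hfun : ∀ z, (Set.Ioi t).indicator (fun z => gaussianPDF 0 v (z - t)) z
            = (Set.Ioi (0 : ℝ)).indicator (gaussianPDF 0 v) (z - t) := by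
          intro z
          by_cases hz : z ∈ Set.Ioi t
          · have hz' : z - t ∈ Set.Ioi (0 : ℝ) := by
              simp only [Set.mem_Ioi] at hz ⊢; linarith
            rw [Set.indicator_of_mem hz, Set.indicator_of_mem hz']
          · have hz' : z - t ∉ Set.Ioi (0 : ℝ) := by
              simp only [Set.mem_Ioi, not_lt] at hz ⊢; linarith
            rw [Set.indicator_of_notMem hz, Set.indicator_of_notMem hz']
        rw [funext hfun]
        exact lintegral_sub_right_eq_self ((Set.Ioi (0:ℝ)).indicator (gaussianPDF 0 v)) t
    _ ≤ ENNReal.ofReal (rexp (-t ^ 2 / (2 * v))) * (1 / 2) :=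
        mul_le_mul_right (gauss_Ioi_zero_le_half hv) _
    _ = ENNReal.ofReal (rexp (-t ^ 2 / (2 * v)) / 2) := by
        rw [ENNReal.ofReal_div_of_pos two_pos, ENNReal.ofReal_ofNat]
        simp [div_eq_mul_inv]

lemma gauss_Ioc (hv : v ≠ 0) (a b : ℝ) :
    gaussianReal 0 v (Set.Ioc a b) ≤ ENNReal.ofReal ((b - a) * (√(2 * π * v))⁻¹) := by
  rw [gaussianReal_apply _ hv]
  calc ∫⁻ z in Set.Ioc a b, gaussianPDF 0 v z
      ≤ ∫⁻ _ in Set.Ioc a b, ENNReal.ofReal ((√(2 * π * (v : ℝ)))⁻¹) := by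
        apply setLIntegral_mono measurable_const
        intro z _
        apply ENNReal.ofReal_le_ofReal
        unfold gaussianPDFReal
        have h1 : rexp (-(z - 0) ^ 2 / (2 * v)) ≤ 1 := by
          rw [exp_le_one_iff]
          apply div_nonpos_of_nonpos_of_nonneg (by nlinarith [sq_nonneg (z - 0)]) (by positivity)
        nlinarith [inv_nonneg.mpr (Real.sqrt_nonneg (2 * π * (v : ℝ)))]
    _ = ENNReal.ofReal ((√(2 * π * (v : ℝ)))⁻¹) * volume (Set.Ioc a b) := setLIntegral_const _ _
    _ ≤ ENNReal.ofReal ((b - a) * (√(2 * π * v))⁻¹) := by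
        rw [Real.volume_Ioc, ← ENNReal.ofReal_mul (by positivity), mul_comm]

lemma dp_split (hv : v ≠ 0) (Δ ε : ℝ) (A : Set ℝ) (hA : MeasurableSet A) :
    gaussianReal 0 v ((fun z => z + Δ) ⁻¹' A)
      ≤ ENNReal.ofReal (rexp ε) * gaussianReal 0 v A
        + gaussianReal 0 v {z | 2 * (v : ℝ) * ε < 2 * z * Δ + Δ ^ 2} := by
  have hv' : (0 : ℝ) < v := lt_of_le_of_ne v.2 (by exact_mod_cast (Ne.symm hv))
  set B : Set ℝ := {z | 2 * (v : ℝ) * ε < 2 * z * Δ + Δ ^ 2} with hB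
  have hBmeas : MeasurableSet B :=
    measurableSet_lt measurable_const (by fun_prop)
  have hP : MeasurableSet ((fun z => z + Δ) ⁻¹' A) := hA.preimage (by fun_prop)
  have hpt : ∀ z, gaussianPDF 0 v z
      ≤ ENNReal.ofReal (rexp ε) * gaussianPDF 0 v (z + Δ) + B.indicator (gaussianPDF 0 v) z := by
    intro z
    by_cases hz : z ∈ B
    · rw [Set.indicator_of_mem hz]
      exact le_add_self
    · rw [Set.indicator_of_notMem hz, add_zero]
      have hle : 2 * z * Δ + Δ ^ 2 ≤ 2 * (v : ℝ) * ε := not_lt.mp hz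
      rw [gaussianPDF, gaussianPDF, ← ENNReal.ofReal_mul (exp_nonneg _)]
      apply ENNReal.ofReal_le_ofReal
      unfold gaussianPDFReal
      simp only [sub_zero]
      have hexp : rexp (-z ^ 2 / (2 * v)) ≤ rexp ε * rexp (-(z + Δ) ^ 2 / (2 * v)) := by
        rw [← exp_add, exp_le_exp]
        have h2v : (0 : ℝ) < 2 * v := by positivity
        have heq : ε + -(z + Δ) ^ 2 / (2 * v) - (-z ^ 2 / (2 * v))
            = (2 * (v : ℝ) * ε - (2 * z * Δ + Δ ^ 2)) / (2 * v) := by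
          field_simp
          ring
        have hnn : (0 : ℝ) ≤ (2 * (v : ℝ) * ε - (2 * z * Δ + Δ ^ 2)) / (2 * v) :=
          div_nonneg (by linarith) h2v.le
        linarith [heq ▸ hnn]
      calc (√(2 * π * v))⁻¹ * rexp (-z ^ 2 / (2 * v))
          ≤ (√(2 * π * v))⁻¹ * (rexp ε * rexp (-(z + Δ) ^ 2 / (2 * v))) :=
            mul_le_mul_of_nonneg_left hexp (by positivity)
        _ = rexp ε * ((√(2 * π * v))⁻¹ * rexp (-(z + Δ) ^ 2 / (2 * v))) := by ring
  have hg : Measurable (gaussianPDF 0 v) := measurable_gaussianPDF 0 v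
  have hgd : Measurable fun z : ℝ => gaussianPDF 0 v (z + Δ) := hg.comp (measurable_id.add_const Δ)
  have htrans : (∫⁻ z in (fun z => z + Δ) ⁻¹' A, gaussianPDF 0 v (z + Δ))
      = ∫⁻ z in A, gaussianPDF 0 v z := by
    rw [← lintegral_indicator hP, ← lintegral_indicator hA]
    have hfun : ∀ z, ((fun z => z + Δ) ⁻¹' A).indicator (fun z => gaussianPDF 0 v (z + Δ)) z
        = A.indicator (gaussianPDF 0 v) (z + Δ) := by
      intro z
      by_cases hz : z ∈ (fun z => z + Δ) ⁻¹' A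
      · rw [Set.indicator_of_mem hz, Set.indicator_of_mem (show z + Δ ∈ A from hz)]
      · rw [Set.indicator_of_notMem hz, Set.indicator_of_notMem (show z + Δ ∉ A from hz)]
    rw [funext hfun]
    exact lintegral_add_right_eq_self (A.indicator (gaussianPDF 0 v)) Δ
  rw [gaussianReal_apply _ hv, gaussianReal_apply _ hv, gaussianReal_apply _ hv]
  calc ∫⁻ z in (fun z => z + Δ) ⁻¹' A, gaussianPDF 0 v z
      ≤ ∫⁻ z in (fun z => z + Δ) ⁻¹' A,
          (ENNReal.ofReal (rexp ε) * gaussianPDF 0 v (z + Δ) + B.indicator (gaussianPDF 0 v) z) :=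
        setLIntegral_mono ((hgd.const_mul _).add (hg.indicator hBmeas)) (fun z _ => hpt z)
    _ = (∫⁻ z in (fun z => z + Δ) ⁻¹' A, ENNReal.ofReal (rexp ε) * gaussianPDF 0 v (z + Δ))
        + ∫⁻ z in (fun z => z + Δ) ⁻¹' A, B.indicator (gaussianPDF 0 v) z := by
        rw [lintegral_add_left (hgd.const_mul _)]
    _ ≤ ENNReal.ofReal (rexp ε) * (∫⁻ z in A, gaussianPDF 0 v z)
        + ∫⁻ z in B, gaussianPDF 0 v z := by
        apply add_le_add
        · rw [lintegral_const_mul _ hgd]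
          exact le_of_eq (by rw [htrans])
        · calc ∫⁻ z in (fun z => z + Δ) ⁻¹' A, B.indicator (gaussianPDF 0 v) z
              ≤ ∫⁻ z, B.indicator (gaussianPDF 0 v) z := setLIntegral_le_lintegral _ _
            _ = ∫⁻ z in B, gaussianPDF 0 v z := lintegral_indicator hBmeas _

set_option maxHeartbeats 1000000 in
lemma tail_le_delta (L εr δ : ℝ) (hL : 0 < L) (hε : 0 < εr) (hε1 : εr ≤ 1)
    (hδ : 0 < δ) (hδ1 : δ ≤ 1) (v : ℝ≥0)
    (hv : (v : ℝ) = 8 * L ^ 2 * Real.log (1.25 / δ) / εr ^ 2)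
    (D : ℝ) (hD : 0 < D) (hD2 : D ≤ 2 * L) :
    gaussianReal 0 v (Set.Ioi ((2 * (v : ℝ) * εr - D ^ 2) / (2 * D))) ≤ ENNReal.ofReal δ := by
  set c := Real.log (1.25 / δ) with hc
  have hc5 : 1 / 5 ≤ c := by
    have h1 : Real.exp (1 / 5) ≤ 1.25 := by
      have h := Real.add_one_le_exp (-(1 / 5) : ℝ)
      rw [Real.exp_neg] at h
      have he := Real.exp_pos ((1 : ℝ) / 5)
      have h2 := mul_le_mul_of_nonneg_right h he.le
      rw [inv_mul_cancel₀ (ne_of_gt he)] at h2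
      nlinarith [h2]
    have h2 : (1.25 : ℝ) ≤ 1.25 / δ := by
      rw [le_div_iff₀ hδ]; nlinarith
    calc (1 : ℝ) / 5 ≤ Real.log 1.25 := (Real.le_log_iff_exp_le (by norm_num)).mpr h1
      _ ≤ c := Real.log_le_log (by norm_num) h2
  have hcpos : 0 < c := lt_of_lt_of_le (by norm_num) hc5
  have hvpos : (0 : ℝ) < v := by rw [hv]; positivity
  have hvne : v ≠ 0 := by
    intro h
    rw [h] at hvpos
    simp at hvpos
  have hδeq : δ = 1.25 * Real.exp (-c) := by
    have h : Real.exp (-c) = δ / 1.25 := by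
      rw [hc, Real.exp_neg, Real.exp_log (by positivity)]
      field_simp
    rw [h]; field_simp
  set t := (2 * (v : ℝ) * εr - D ^ 2) / (2 * D) with hts
  set τ := L * (4 * c - εr) / εr with hτs
  have htval : t = 8 * L ^ 2 * c / (εr * D) - D / 2 := by
    rw [hts, hv]; field_simp
  have hτval : τ = 8 * L ^ 2 * c / (εr * (2 * L)) - L := by
    rw [hτs]; field_simp; ring
  have h1 : 8 * L ^ 2 * c / (εr * (2 * L)) ≤ 8 * L ^ 2 * c / (εr * D) :=
    div_le_div_of_nonneg_left (by positivity) (by positivity) (by nlinarith)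
  have hτt : τ ≤ t := by rw [htval, hτval]; linarith
  rcases le_or_gt (1 / 4 : ℝ) c with hc4 | hc4
  · -- large c case : use the Gaussian tail bound
    have hτ0 : 0 ≤ τ := by
      rw [hτs]
      apply div_nonneg _ hε.le
      nlinarith
    calc gaussianReal 0 v (Set.Ioi t) ≤ gaussianReal 0 v (Set.Ioi τ) :=
          measure_mono (Set.Ioi_subset_Ioi hτt)
      _ ≤ ENNReal.ofReal (rexp (-τ ^ 2 / (2 * v)) / 2) := gauss_tail hvne hτ0
      _ ≤ ENNReal.ofReal δ := by
          apply ENNReal.ofReal_le_ofReal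
          have hτ2 : τ ^ 2 / (2 * (v : ℝ)) = (4 * c - εr) ^ 2 / (16 * c) := by
            rw [hτs, hv]; field_simp; ring
          have hexpo : -τ ^ 2 / (2 * (v : ℝ)) ≤ 1 / 2 - c := by
            rw [neg_div, hτ2]
            have heq : (4 * c - εr) ^ 2 / (16 * c) - (c - 1 / 2)
                = (8 * c * (1 - εr) + εr ^ 2) / (16 * c) := by
              field_simp; ring
            have hnn : (0 : ℝ) ≤ (8 * c * (1 - εr) + εr ^ 2) / (16 * c) :=
              div_nonneg (by nlinarith) (by positivity)
            linarith [heq ▸ hnn]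
          have hsq : Real.exp (1 / 2) * Real.exp (1 / 2) = Real.exp 1 := by
            rw [← Real.exp_add]; norm_num
          have he25 : Real.exp (1 / 2) ≤ 2.5 := by
            nlinarith [Real.exp_pos ((1 : ℝ) / 2), Real.exp_one_lt_d9]
          calc rexp (-τ ^ 2 / (2 * (v : ℝ))) / 2 ≤ rexp (1 / 2 - c) / 2 := by
                gcongr
            _ = rexp (1 / 2) * rexp (-c) / 2 := by rw [← Real.exp_add]; ring_nf
            _ ≤ 2.5 * rexp (-c) / 2 := by
                have := Real.exp_pos (-c)
                nlinarith
            _ = 1.25 * rexp (-c) := by ring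
            _ = δ := hδeq.symm
  · -- small c case : crude bound
    have hδbig : 15 / 16 ≤ δ := by
      rw [hδeq]
      have h := Real.add_one_le_exp (-c)
      nlinarith
    set a := min τ 0 with has
    have ha0 : a ≤ 0 := min_le_right _ _
    have hat : a ≤ t := le_trans (min_le_left _ _) hτt
    have hsub : Set.Ioi t ⊆ Set.Ioc a 0 ∪ Set.Ioi 0 := by
      intro z hz
      simp only [Set.mem_Ioi] at hz
      rcases le_or_gt z 0 with h | h
      · exact Or.inl ⟨lt_of_le_of_lt hat hz, h⟩
      · exact Or.inr h
    have hma : -a ≤ L := by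
      rcases le_total τ 0 with h | h
      · rw [has, min_eq_left h]
        have : -L ≤ τ := by
          rw [hτs, le_div_iff₀ hε]
          nlinarith
        linarith
      · rw [has, min_eq_right h]
        linarith
    have hsqrt : 3 * L ≤ Real.sqrt (2 * π * v) := by
      have hπ : (3 : ℝ) ≤ π := by linarith [Real.pi_gt_three]
      have hεr2 : εr ^ 2 ≤ 1 := by nlinarith
      have hkey : 8 * L ^ 2 * c ≤ 8 * L ^ 2 * c / εr ^ 2 := by
        rw [le_div_iff₀ (by positivity)]
        nlinarith [mul_pos (mul_pos (by norm_num : (0:ℝ) < 8) (mul_pos hL hL)) hcpos]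
      have h2πv : 9 * L ^ 2 ≤ 2 * π * (v : ℝ) := by
        rw [hv]
        have hx : (0 : ℝ) ≤ 8 * L ^ 2 * c / εr ^ 2 := by positivity
        nlinarith [mul_le_mul_of_nonneg_right hπ hx, hkey, mul_pos hL hL,
          mul_le_mul_of_nonneg_left hc5 (by positivity : (0:ℝ) ≤ 8 * L ^ 2)]
      calc 3 * L = Real.sqrt ((3 * L) ^ 2) := (Real.sqrt_sq (by positivity)).symm
        _ ≤ Real.sqrt (2 * π * v) := Real.sqrt_le_sqrt (by nlinarith)
    have hsqpos : 0 < Real.sqrt (2 * π * (v : ℝ)) := lt_of_lt_of_le (by positivity) hsqrt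
    have hfrac : (0 - a) * (√(2 * π * (v : ℝ)))⁻¹ ≤ 7 / 16 := by
      have hinv : (√(2 * π * (v : ℝ)))⁻¹ ≤ (3 * L)⁻¹ :=
        inv_anti₀ (by positivity) hsqrt
      have h3 : (0 - a) * (√(2 * π * (v : ℝ)))⁻¹ ≤ L * (3 * L)⁻¹ :=
        mul_le_mul (by linarith) hinv (by positivity) hL.le
      have h4 : L * (3 * L)⁻¹ = 1 / 3 := by field_simp
      linarith
    calc gaussianReal 0 v (Set.Ioi t) ≤ gaussianReal 0 v (Set.Ioc a 0 ∪ Set.Ioi 0) :=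
          measure_mono hsub
      _ ≤ gaussianReal 0 v (Set.Ioc a 0) + gaussianReal 0 v (Set.Ioi 0) := measure_union_le _ _
      _ ≤ ENNReal.ofReal ((0 - a) * (√(2 * π * v))⁻¹) + 1 / 2 :=
          add_le_add (gauss_Ioc hvne a 0) (gauss_Ioi_zero_le_half hvne)
      _ ≤ ENNReal.ofReal δ := by
          have h12 : (1 : ℝ≥0∞) / 2 = ENNReal.ofReal (1 / 2) := by
            rw [ENNReal.ofReal_div_of_pos two_pos, ENNReal.ofReal_one, ENNReal.ofReal_ofNat]
          rw [h12, ← ENNReal.ofReal_add (mul_nonneg (by linarith : (0:ℝ) ≤ 0 - a) (inv_nonneg.2 (Real.sqrt_nonneg _))) (by norm_num)]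
          apply ENNReal.ofReal_le_ofReal
          linarith

end GaussDPAux

set_option maxHeartbeats 1000000 in
/-- Gaussian mechanism guarantee for releasing a sample mean. -/
theorem gaussian_mechanism_mean_dp
    (n : ℕ) (hn : 1 ≤ n) (μ L : ℝ) (hL : 0 < L)
    (x x' : Fin n → ℝ)
    (hx : ∀ i, x i ∈ Set.Icc (μ - L) (μ + L))
    (hx' : ∀ i, x' i ∈ Set.Icc (μ - L) (μ + L))
    (hdiff : ∃ i, x i ≠ x' i ∧ ∀ j, j ≠ i → x j = x' j)
    (ε δ : ℝ) (hε : 0 < ε) (hε1 : ε ≤ 1) (hδ : 0 < δ) (hδ1 : δ ≤ 1)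
    (σDP2 : ℝ≥0) (hσ : (σDP2 : ℝ) = 8 * L ^ 2 * Real.log (1.25 / δ) / ε ^ 2)
    (S : Set ℝ) (hS : MeasurableSet S) :
    gaussianReal 0 σDP2 {z | (∑ i, x i) / n + z / n ∈ S}
      ≤ ENNReal.ofReal (Real.exp ε) *
          gaussianReal 0 σDP2 {z | (∑ i, x' i) / n + z / n ∈ S}
        + ENNReal.ofReal δ := by
  obtain ⟨i0, hne, hsame⟩ := hdiff
  set Δ : ℝ := (∑ i, x i) - (∑ i, x' i) with hΔdef
  have hΔeq : Δ = x i0 - x' i0 := by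
    rw [hΔdef, ← Finset.sum_sub_distrib, Finset.sum_eq_single i0]
    · intro j _ hj
      rw [hsame j hj]; ring
    · intro h
      exact absurd (Finset.mem_univ i0) h
  have hΔne : Δ ≠ 0 := by
    rw [hΔeq]; exact sub_ne_zero.mpr hne
  have hΔle : |Δ| ≤ 2 * L := by
    rw [hΔeq]
    obtain ⟨ha1, ha2⟩ := hx i0
    obtain ⟨hb1, hb2⟩ := hx' i0
    rw [abs_le]
    constructor <;> linarith
  have hcpos : 0 < Real.log (1.25 / δ) := by
    have h2 : (1 : ℝ) < 1.25 / δ := by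
      rw [lt_div_iff₀ hδ]; nlinarith
    exact Real.log_pos h2
  have hvne : σDP2 ≠ 0 := by
    intro h
    have h0 : (σDP2 : ℝ) = 0 := by rw [h]; simp
    rw [hσ] at h0
    have : 0 < 8 * L ^ 2 * Real.log (1.25 / δ) / ε ^ 2 := by positivity
    linarith
  set A' := {z : ℝ | (∑ i, x' i) / n + z / n ∈ S} with hA'def
  have hA'meas : MeasurableSet A' := by
    have : A' = (fun z : ℝ => (∑ i, x' i) / n + z / n) ⁻¹' S := rfl
    rw [this]
    exact hS.preimage (by fun_prop)
  have hsetEq : {z : ℝ | (∑ i, x i) / n + z / n ∈ S} = (fun z => z + Δ) ⁻¹' A' := by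
    ext z
    simp only [Set.mem_setOf_eq, Set.mem_preimage, hA'def]
    have harith : (∑ i, x' i) / (n : ℝ) + (z + Δ) / n = (∑ i, x i) / n + z / n := by
      rw [hΔdef]; ring
    rw [harith]
  rw [hsetEq]
  refine le_trans (GaussDPAux.dp_split hvne Δ ε A' hA'meas) (add_le_add_right ?_ _)
  rcases lt_or_gt_of_ne hΔne with hneg | hpos
  · have hBeq : {z : ℝ | 2 * (σDP2 : ℝ) * ε < 2 * z * Δ + Δ ^ 2}
        = Set.Iio ((2 * (σDP2 : ℝ) * ε - Δ ^ 2) / (2 * Δ)) := by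
      ext z
      simp only [Set.mem_setOf_eq, Set.mem_Iio]
      rw [lt_div_iff_of_neg (by linarith : 2 * Δ < 0)]
      constructor <;> intro h <;> nlinarith
    rw [hBeq, GaussDPAux.gauss_Iio hvne]
    have hflip : -((2 * (σDP2 : ℝ) * ε - Δ ^ 2) / (2 * Δ))
        = (2 * (σDP2 : ℝ) * ε - (-Δ) ^ 2) / (2 * -Δ) := by
      rw [neg_sq, show 2 * -Δ = -(2 * Δ) by ring, div_neg]
    rw [hflip]
    exact GaussDPAux.tail_le_delta L ε δ hL hε hε1 hδ hδ1 σDP2 hσ (-Δ) (by linarith)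
      (by rw [abs_of_neg hneg] at hΔle; linarith)
  · have hBeq : {z : ℝ | 2 * (σDP2 : ℝ) * ε < 2 * z * Δ + Δ ^ 2}
        = Set.Ioi ((2 * (σDP2 : ℝ) * ε - Δ ^ 2) / (2 * Δ)) := by
      ext z
      simp only [Set.mem_setOf_eq, Set.mem_Ioi]
      rw [div_lt_iff₀ (by linarith : (0:ℝ) < 2 * Δ)]
      constructor <;> intro h <;> nlinarith
    rw [hBeq]
    exact GaussDPAux.tail_le_delta L ε δ hL hε hε1 hδ hδ1 σDP2 hσ Δ hpos
      (by rw [abs_of_pos hpos] at hΔle; exact hΔle)
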